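/- Let H be a Hopf *-algebra acting on *-algebras A and B via *-actions that are both inner via momentum maps J_A: H → A and J_B: H → B. Let E be a (B,A)-bimodule. Then the formula g ▷ x = J_B(g₍₁₎)·x·J_A(S(g₍₂₎)) defines a left H-module structure on E satisfying g ▷ (b·x·a) = (g₍₁₎ ▷ b)·(g₍₂₎ ▷ x)·(g₍₃₎ ▷ a). -/

import Mathlib

variable {C : Type*} [CommRing C] [StarRing C]
variable {H : Type*} [Ring H] [HopfAlgebra C H] [StarRing H] [StarModule C H]
variable {A : Type*} [Ring A] [StarRing A] [Algebra C A] [StarModule C A]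

open TensorProduct in
/-- `SwRep g g1 g2` states that `Δ(g) = ∑ i, g1 i ⊗ g2 i`, i.e. `(g1, g2)` is a Sweedler
representation of the comultiplication of `g`. -/
def SwRep {C : Type*} [CommRing C] {H : Type*} [Ring H] [HopfAlgebra C H]
    (g : H) {n : ℕ} (g1 g2 : Fin n → H) : Prop :=
  Coalgebra.comul (R := C) g = ∑ i, g1 i ⊗ₜ[C] g2 i

/-- `H` is a Hopf `*`-algebra: comultiplication and counit are `*`-homomorphisms. -/
def IsHopfStar (C H : Type*) [CommRing C] [StarRing C] [Ring H] [HopfAlgebra C H]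
    [StarRing H] [StarModule C H] : Prop :=
  (∀ g : H, Coalgebra.counit (R := C) (star g) = star (Coalgebra.counit (R := C) g)) ∧
  (∀ (g : H) (n : ℕ) (g1 g2 : Fin n → H), SwRep (C := C) g g1 g2 →
      SwRep (C := C) (star g) (fun i => star (g1 i)) (fun i => star (g2 i)))

/-- A left `*`-action of the Hopf `*`-algebra `H` on the `*`-algebra `A`:
`g ▷ (ab) = (g₍₁₎ ▷ a)(g₍₂₎ ▷ b)`, `g ▷ 1 = ε(g)1`, `(g ▷ a)* = S(g)* ▷ a*`. -/
structure StarAction (C H A : Type*) [CommRing C] [StarRing C] [Ring H] [HopfAlgebra C H]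
    [StarRing H] [StarModule C H] [Ring A] [StarRing A] [Algebra C A] [StarModule C A] where
  act : H →ₗ[C] A →ₗ[C] A
  act_one : ∀ a : A, act 1 a = a
  act_mul : ∀ (g h : H) (a : A), act (g * h) a = act g (act h a)
  act_ab : ∀ (g : H) (a b : A) (n : ℕ) (g1 g2 : Fin n → H), SwRep (C := C) g g1 g2 →
      act g (a * b) = ∑ i, act (g1 i) a * act (g2 i) b
  act_unit : ∀ g : H, act g 1 = Coalgebra.counit (R := C) g • (1 : A)
  act_star : ∀ (g : H) (a : A), star (act g a) =
      act (star (HopfAlgebra.antipode (R := C) g)) (star a)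
variable {B : Type*} [Ring B] [StarRing B] [Algebra C B] [StarModule C B]

section Toolkit
open TensorProduct HopfAlgebra
variable {C : Type*} [CommRing C] {H : Type*} [Ring H] [HopfAlgebra C H]

theorem exists_swrep (g : H) : ∃ (n : ℕ) (g1 g2 : Fin n → H), SwRep (C := C) g g1 g2 := by
  obtain ⟨s, hs⟩ := TensorProduct.exists_finset (R := C) (Coalgebra.comul g)
  refine ⟨s.card, fun i => (s.equivFin.symm i : H × H).1,
    fun i => (s.equivFin.symm i : H × H).2, ?_⟩
  rw [SwRep, hs, ← Finset.sum_attach s (fun p => p.1 ⊗ₜ[C] p.2)]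
  exact (Equiv.sum_comp s.equivFin.symm (fun p : s => (p : H × H).1 ⊗ₜ[C] (p : H × H).2)).symm

theorem swrep_antipode_mul {g : H} {n : ℕ} {g1 g2 : Fin n → H} (h : SwRep (C := C) g g1 g2) :
    ∑ i, antipode (R := C) (g1 i) * g2 i = algebraMap C H (Coalgebra.counit (R := C) g) := by
  have hh : Coalgebra.comul (R := C) g = ∑ i, g1 i ⊗ₜ[C] g2 i := h
  have := mul_antipode_rTensor_comul_apply (R := C) g
  rw [hh, map_sum, map_sum] at this
  simpa using this

theorem swrep_mul_antipode {g : H} {n : ℕ} {g1 g2 : Fin n → H} (h : SwRep (C := C) g g1 g2) :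
    ∑ i, g1 i * antipode (R := C) (g2 i) = algebraMap C H (Coalgebra.counit (R := C) g) := by
  have hh : Coalgebra.comul (R := C) g = ∑ i, g1 i ⊗ₜ[C] g2 i := h
  have := mul_antipode_lTensor_comul_apply (R := C) g
  rw [hh, map_sum, map_sum] at this
  simpa using this

theorem swrep_counit_left {g : H} {n : ℕ} {g1 g2 : Fin n → H} (h : SwRep (C := C) g g1 g2) :
    ∑ i, Coalgebra.counit (R := C) (g1 i) • g2 i = g := by
  have hh : Coalgebra.comul (R := C) g = ∑ i, g1 i ⊗ₜ[C] g2 i := h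
  have := Coalgebra.rTensor_counit_comul (R := C) g
  rw [hh, map_sum] at this
  have := congrArg (TensorProduct.lid C H) this
  simpa [map_sum] using this

theorem swrep_counit_right {g : H} {n : ℕ} {g1 g2 : Fin n → H} (h : SwRep (C := C) g g1 g2) :
    ∑ i, Coalgebra.counit (R := C) (g2 i) • g1 i = g := by
  have hh : Coalgebra.comul (R := C) g = ∑ i, g1 i ⊗ₜ[C] g2 i := h
  have := Coalgebra.lTensor_counit_comul (R := C) g
  rw [hh, map_sum] at this
  have := congrArg (TensorProduct.rid C H) this
  simpa [map_sum] using this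

/-- Collapse lemma: `∑ S(g₍₁₎₍₁₎) g₍₁₎₍₂₎ ⊗ g₍₂₎ = 1 ⊗ g` applied to a bilinear function. -/
theorem swrep_collapse {M : Type*} [AddCommMonoid M] [Module C M] (f : H → H → M)
    (h1a : ∀ x y z, f (x + y) z = f x z + f y z)
    (h1s : ∀ (c : C) x z, f (c • x) z = c • f x z)
    (h2a : ∀ x y z, f x (y + z) = f x y + f x z)
    (h2s : ∀ (c : C) x z, f x (c • z) = c • f x z)
    {h : H} {n : ℕ} {c d : Fin n → H} (hh : SwRep (C := C) h c d)
    {m : Fin n → ℕ} {u v : (i : Fin n) → Fin (m i) → H}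
    (hc : ∀ k, SwRep (C := C) (c k) (u k) (v k)) :
    ∑ k, ∑ l, f (antipode (R := C) (u k l) * v k l) (d k) = f 1 h := by
  have hz : ∀ z, f 0 z = 0 := by
    intro z; have := h1s 0 0 z; simpa using this
  have fsum : ∀ {ι : Type} (t : Finset ι) (F : ι → H) (z : H),
      f (∑ i ∈ t, F i) z = ∑ i ∈ t, f (F i) z := by
    intro ι t F z
    induction t using Finset.cons_induction with
    | empty => simpa using hz z
    | cons a t ha ih => rw [Finset.sum_cons, h1a, ih, Finset.sum_cons]
  calc ∑ k, ∑ l, f (antipode (R := C) (u k l) * v k l) (d k)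
      = ∑ k, f (algebraMap C H (Coalgebra.counit (R := C) (c k))) (d k) := by
        refine Finset.sum_congr rfl fun k _ => ?_
        rw [← fsum, swrep_antipode_mul (hc k)]
    _ = ∑ k, Coalgebra.counit (R := C) (c k) • f 1 (d k) := by
        refine Finset.sum_congr rfl fun k _ => ?_
        rw [Algebra.algebraMap_eq_smul_one, h1s]
    _ = f 1 h := by
        have hz2 : f 1 0 = 0 := by have := h2s 0 1 0; simpa using this
        have gsum : ∀ {ι : Type} (t : Finset ι) (F : ι → H),
            f 1 (∑ i ∈ t, F i) = ∑ i ∈ t, f 1 (F i) := by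
          intro ι t F
          induction t using Finset.cons_induction with
          | empty => simpa using hz2
          | cons a t ha ih => rw [Finset.sum_cons, h2a, ih, Finset.sum_cons]
        calc ∑ k, Coalgebra.counit (R := C) (c k) • f 1 (d k)
            = ∑ k, f 1 (Coalgebra.counit (R := C) (c k) • d k) := by
              exact Finset.sum_congr rfl fun k _ => (h2s _ _ _).symm
          _ = f 1 h := by rw [← gsum, swrep_counit_left hh]

theorem antipode_one' : antipode (R := C) (1 : H) = 1 := by
  have h : SwRep (C := C) (1 : H) (fun _ : Fin 1 => 1) (fun _ : Fin 1 => 1) := by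
    show Coalgebra.comul (R := C) (1 : H) = _
    rw [Bialgebra.comul_one]
    simp [Algebra.TensorProduct.one_def]
  have := swrep_antipode_mul h
  simpa using this

theorem sum_S_mul {c d : H} {nc nd : ℕ} {c1 c2 : Fin nc → H} {d1 d2 : Fin nd → H}
    (hc : SwRep (C := C) c c1 c2) (hd : SwRep (C := C) d d1 d2) :
    ∑ j, ∑ l, antipode (R := C) (c1 j * d1 l) * (c2 j * d2 l)
      = algebraMap C H (Coalgebra.counit (R := C) (c * d)) := by
  have hc' : Coalgebra.comul (R := C) c = ∑ j, c1 j ⊗ₜ[C] c2 j := hc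
  have hd' : Coalgebra.comul (R := C) d = ∑ l, d1 l ⊗ₜ[C] d2 l := hd
  have key : Coalgebra.comul (R := C) (c * d)
      = ∑ j, ∑ l, (c1 j * d1 l) ⊗ₜ[C] (c2 j * d2 l) := by
    rw [Bialgebra.comul_mul, hc', hd', Finset.sum_mul_sum]
    simp [Algebra.TensorProduct.tmul_mul_tmul]
  have := mul_antipode_rTensor_comul_apply (R := C) (c * d)
  rw [key, map_sum, map_sum] at this
  simpa [map_sum] using this

end Toolkit

section Coassoc
open TensorProduct HopfAlgebra
variable {C : Type*} [CommRing C] {H : Type*} [Ring H] [HopfAlgebra C H]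
variable {M : Type*} [AddCommMonoid M] [Module C M]

/-- Coassociativity transport for Sweedler representations, stated for a trilinear function. -/
theorem swrep_coassoc (f : H → H → H → M)
    (h1a : ∀ x y z w, f (x + y) z w = f x z w + f y z w)
    (h1s : ∀ (c : C) x z w, f (c • x) z w = c • f x z w)
    (h2a : ∀ x y z w, f x (y + z) w = f x y w + f x z w)
    (h2s : ∀ (c : C) x z w, f x (c • z) w = c • f x z w)
    (h3a : ∀ x y z w, f x y (z + w) = f x y z + f x y w)
    (h3s : ∀ (c : C) x z w, f x z (c • w) = c • f x z w)
    {g : H} {n : ℕ} {p q : Fin n → H} (hg : SwRep (C := C) g p q)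
    {m : Fin n → ℕ} {p1 p2 : (i : Fin n) → Fin (m i) → H}
    (hp : ∀ i, SwRep (C := C) (p i) (p1 i) (p2 i))
    {n' : ℕ} {p' q' : Fin n' → H} (hg' : SwRep (C := C) g p' q')
    {m' : Fin n' → ℕ} {r s : (i : Fin n') → Fin (m' i) → H}
    (hq : ∀ i, SwRep (C := C) (q' i) (r i) (s i)) :
    ∑ i, ∑ j, f (p1 i j) (p2 i j) (q i) = ∑ i, ∑ j, f (p' i) (r i j) (s i j) := by
  let F2 : H → H → (H →ₗ[C] M) := fun x y =>
    { toFun := f x y, map_add' := h3a x y, map_smul' := fun c w => h3s c x y w }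
  let T : H →ₗ[C] H →ₗ[C] (H →ₗ[C] M) := LinearMap.mk₂ C F2
    (fun x y z => LinearMap.ext fun w => h1a x y z w)
    (fun c x z => LinearMap.ext fun w => h1s c x z w)
    (fun x y z => LinearMap.ext fun w => h2a x y z w)
    (fun c x z => LinearMap.ext fun w => h2s c x z w)
  let T3 : H ⊗[C] (H ⊗[C] H) →ₗ[C] M :=
    TensorProduct.lift ((TensorProduct.lift.equiv (RingHom.id C) H H M).toLinearMap.comp T)
  have key : ∀ (x y z : H), T3 (x ⊗ₜ[C] (y ⊗ₜ[C] z)) = f x y z := by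
    intro x y z
    simp [T3, T, F2, TensorProduct.lift.equiv]
  have hhg : Coalgebra.comul (R := C) g = ∑ i, p i ⊗ₜ[C] q i := hg
  have hhg' : Coalgebra.comul (R := C) g = ∑ i, p' i ⊗ₜ[C] q' i := hg'
  have e1 : (TensorProduct.assoc C H H H)
      ((Coalgebra.comul (R := C)).rTensor H (Coalgebra.comul (R := C) g))
      = ∑ i, ∑ j, p1 i j ⊗ₜ[C] (p2 i j ⊗ₜ[C] q i) := by
    rw [hhg, map_sum, map_sum]
    refine Finset.sum_congr rfl fun i _ => ?_
    rw [LinearMap.rTensor_tmul]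
    have hpi : Coalgebra.comul (R := C) (p i) = ∑ j, p1 i j ⊗ₜ[C] p2 i j := hp i
    rw [hpi, TensorProduct.sum_tmul, map_sum]
    exact Finset.sum_congr rfl fun j _ => TensorProduct.assoc_tmul _ _ _
  have e2 : (Coalgebra.comul (R := C)).lTensor H (Coalgebra.comul (R := C) g)
      = ∑ i, ∑ j, p' i ⊗ₜ[C] (r i j ⊗ₜ[C] s i j) := by
    rw [hhg', map_sum]
    refine Finset.sum_congr rfl fun i _ => ?_
    rw [LinearMap.lTensor_tmul]
    have hqi : Coalgebra.comul (R := C) (q' i) = ∑ j, r i j ⊗ₜ[C] s i j := hq i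
    rw [hqi, TensorProduct.tmul_sum]
  have hco := Coalgebra.coassoc_apply (R := C) g
  have := congrArg T3 (e1.symm.trans (hco.trans e2))
  rw [map_sum, map_sum] at this
  simpa only [map_sum, key] using this
end Coassoc

section AntipodeMul
open TensorProduct HopfAlgebra
variable {C : Type*} [CommRing C] {H : Type*} [Ring H] [HopfAlgebra C H]

local notation "S" => antipode (R := C) (A := H)
local notation "ε" => Coalgebra.counit (R := C) (A := H)

theorem antipode_mul' (a b : H) :
    antipode (R := C) (a * b) = antipode (R := C) b * antipode (R := C) a := by
  obtain ⟨na, p, q, hpq⟩ := exists_swrep (C := C) a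
  choose mp p1 p2 hp using fun i => exists_swrep (C := C) (p i)
  choose mq q1 q2 hq using fun i => exists_swrep (C := C) (q i)
  obtain ⟨nb, P, Q, hPQ⟩ := exists_swrep (C := C) b
  choose mP P1 P2 hP using fun k => exists_swrep (C := C) (P k)
  choose mQ Q1 Q2 hQ using fun k => exists_swrep (C := C) (Q k)
  -- the master sum
  set X : H := ∑ i, ∑ j, ∑ k, ∑ l,
      S (p i * P k) * (q1 i j * Q1 k l) * (S (Q2 k l) * S (q2 i j)) with hX
  -- Way 1 : X = S (a * b)
  have way1 : X = S (a * b) := by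
    have step : ∀ i j k, ∑ l, S (p i * P k) * (q1 i j * Q1 k l) * (S (Q2 k l) * S (q2 i j))
        = Coalgebra.counit (R := C) (Q k) • (S (p i * P k) * q1 i j * S (q2 i j)) := by
      intro i j k
      calc ∑ l, S (p i * P k) * (q1 i j * Q1 k l) * (S (Q2 k l) * S (q2 i j))
          = ∑ l, S (p i * P k) * q1 i j * (Q1 k l * S (Q2 k l)) * S (q2 i j) :=
            Finset.sum_congr rfl fun l _ => by simp only [mul_assoc]
        _ = S (p i * P k) * q1 i j * (∑ l, Q1 k l * S (Q2 k l)) * S (q2 i j) := by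
            rw [← Finset.sum_mul, ← Finset.mul_sum]
        _ = Coalgebra.counit (R := C) (Q k) • (S (p i * P k) * q1 i j * S (q2 i j)) := by
            rw [swrep_mul_antipode (hQ k), Algebra.algebraMap_eq_smul_one]
            simp only [mul_smul_comm, smul_mul_assoc, mul_one]
    have step2 : ∀ i k, ∑ j, Coalgebra.counit (R := C) (Q k) •
          (S (p i * P k) * q1 i j * S (q2 i j))
        = Coalgebra.counit (R := C) (Q k) • Coalgebra.counit (R := C) (q i) • S (p i * P k) := by
      intro i k
      rw [← Finset.smul_sum]
      congr 1
      calc ∑ j, S (p i * P k) * q1 i j * S (q2 i j)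
          = S (p i * P k) * (∑ j, q1 i j * S (q2 i j)) := by
            rw [Finset.mul_sum]
            exact Finset.sum_congr rfl fun j _ => by rw [mul_assoc]
        _ = Coalgebra.counit (R := C) (q i) • S (p i * P k) := by
            rw [swrep_mul_antipode (hq i), Algebra.algebraMap_eq_smul_one, mul_smul_comm, mul_one]
    have e1 : X = ∑ i, ∑ k, Coalgebra.counit (R := C) (Q k) •
        Coalgebra.counit (R := C) (q i) • S (p i * P k) := by
      rw [hX]
      refine Finset.sum_congr rfl fun i _ => ?_
      rw [Finset.sum_comm]
      refine Finset.sum_congr rfl fun k _ => ?_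
      rw [Finset.sum_congr rfl fun j _ => step i j k, step2 i k]
    have e2 : ∑ i, ∑ k, Coalgebra.counit (R := C) (Q k) •
        Coalgebra.counit (R := C) (q i) • S (p i * P k)
        = S ((∑ i, Coalgebra.counit (R := C) (q i) • p i) *
            (∑ k, Coalgebra.counit (R := C) (Q k) • P k)) := by
      rw [Finset.sum_mul_sum, map_sum]
      refine Finset.sum_congr rfl fun i _ => ?_
      rw [map_sum]
      refine Finset.sum_congr rfl fun k _ => ?_
      rw [smul_mul_assoc, mul_smul_comm, map_smul, map_smul]
      exact smul_comm _ _ _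
    rw [e1, e2, swrep_counit_right hpq, swrep_counit_right hPQ]
  -- Way 2 : X = S b * S a
  have simps : ∀ (L : List Bool), True := fun _ => trivial
  have trans_a : X = ∑ i, ∑ j, ∑ k, ∑ l,
      S (p1 i j * P k) * (p2 i j * Q1 k l) * (S (Q2 k l) * S (q i)) := by
    rw [hX]
    exact (swrep_coassoc (C := C) (M := H)
      (fun α β γ => ∑ k, ∑ l, S (α * P k) * (β * Q1 k l) * (S (Q2 k l) * S γ))
      (fun x y z w => by
        simp only [add_mul, map_add, mul_add, Finset.sum_add_distrib])
      (fun c x z w => by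
        simp only [smul_mul_assoc, map_smul, mul_smul_comm, Finset.smul_sum])
      (fun x y z w => by
        simp only [add_mul, map_add, mul_add, Finset.sum_add_distrib])
      (fun c x z w => by
        simp only [smul_mul_assoc, map_smul, mul_smul_comm, Finset.smul_sum])
      (fun x y z w => by
        simp only [add_mul, map_add, mul_add, Finset.sum_add_distrib])
      (fun c x z w => by
        simp only [smul_mul_assoc, map_smul, mul_smul_comm, Finset.smul_sum])
      hpq hp hpq hq).symm
  have trans_b : X = ∑ i, ∑ j, ∑ k, ∑ l,
      S (p1 i j * P1 k l) * (p2 i j * P2 k l) * (S (Q k) * S (q i)) := by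
    rw [trans_a]
    refine Finset.sum_congr rfl fun i _ => Finset.sum_congr rfl fun j _ => ?_
    exact (swrep_coassoc (C := C) (M := H)
      (fun α β γ => S (p1 i j * α) * (p2 i j * β) * (S γ * S (q i)))
      (fun x y z w => by
        simp only [add_mul, map_add, mul_add, Finset.sum_add_distrib])
      (fun c x z w => by
        simp only [smul_mul_assoc, map_smul, mul_smul_comm, Finset.smul_sum])
      (fun x y z w => by
        simp only [add_mul, map_add, mul_add, Finset.sum_add_distrib])
      (fun c x z w => by
        simp only [smul_mul_assoc, map_smul, mul_smul_comm, Finset.smul_sum])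
      (fun x y z w => by
        simp only [add_mul, map_add, mul_add, Finset.sum_add_distrib])
      (fun c x z w => by
        simp only [smul_mul_assoc, map_smul, mul_smul_comm, Finset.smul_sum])
      hPQ hP hPQ hQ).symm
  have way2 : X = antipode (R := C) b * antipode (R := C) a := by
    have e3 : X = ∑ i, ∑ k, Coalgebra.counit (R := C) (p i) •
        Coalgebra.counit (R := C) (P k) • (S (Q k) * S (q i)) := by
      rw [trans_b]
      refine Finset.sum_congr rfl fun i _ => ?_
      rw [Finset.sum_comm]
      refine Finset.sum_congr rfl fun k _ => ?_
      calc ∑ j, ∑ l, S (p1 i j * P1 k l) * (p2 i j * P2 k l) * (S (Q k) * S (q i))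
          = (∑ j, ∑ l, S (p1 i j * P1 k l) * (p2 i j * P2 k l)) * (S (Q k) * S (q i)) := by
            rw [Finset.sum_mul]
            exact Finset.sum_congr rfl fun j _ => by rw [Finset.sum_mul]
        _ = algebraMap C H (Coalgebra.counit (R := C) (p i * P k)) * (S (Q k) * S (q i)) := by
            rw [sum_S_mul (hp i) (hP k)]
        _ = Coalgebra.counit (R := C) (p i) •
              Coalgebra.counit (R := C) (P k) • (S (Q k) * S (q i)) := by
            rw [← Algebra.smul_def, Bialgebra.counit_mul, mul_smul]
    have e4 : ∑ i, ∑ k, Coalgebra.counit (R := C) (p i) •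
        Coalgebra.counit (R := C) (P k) • (S (Q k) * S (q i))
        = (∑ k, Coalgebra.counit (R := C) (P k) • S (Q k)) *
          (∑ i, Coalgebra.counit (R := C) (p i) • S (q i)) := by
      rw [Finset.sum_mul_sum, Finset.sum_comm]
      refine Finset.sum_congr rfl fun i _ => Finset.sum_congr rfl fun k _ => ?_
      rw [smul_mul_assoc, mul_smul_comm]
      exact smul_comm _ _ _
    have e5 : (∑ k, Coalgebra.counit (R := C) (P k) • S (Q k)) = antipode (R := C) b := by
      rw [show (∑ k, Coalgebra.counit (R := C) (P k) • S (Q k))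
          = S (∑ k, Coalgebra.counit (R := C) (P k) • Q k) by rw [map_sum]; simp only [map_smul],
        swrep_counit_left hPQ]
    have e6 : (∑ i, Coalgebra.counit (R := C) (p i) • S (q i)) = antipode (R := C) a := by
      rw [show (∑ i, Coalgebra.counit (R := C) (p i) • S (q i))
          = S (∑ i, Coalgebra.counit (R := C) (p i) • q i) by rw [map_sum]; simp only [map_smul],
        swrep_counit_left hpq]
    rw [e3, e4, e5, e6]
  rw [← way1, way2]
end AntipodeMul


open TensorProduct HopfAlgebra in
/-- If the `*`-actions of `H` on `A` and `B` are both inner via momentum maps `J_A`, `J_B`,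
then `g ▷ x = J_B(g₍₁₎)·x·J_A(S(g₍₂₎))` defines a left `H`-module structure on any
`(B,A)`-bimodule `E` satisfying `g ▷ (b·x·a) = (g₍₁₎ ▷ b)·(g₍₂₎ ▷ x)·(g₍₃₎ ▷ a)`. -/
theorem inner_actions_lift_to_bimodule (hH : IsHopfStar C H)
    (α : StarAction C H A) (β : StarAction C H B)
    (JA : H →ₐ[C] A) (JAstar : ∀ g : H, JA (star g) = star (JA g))
    (hA : ∀ (g : H) (a : A) (n : ℕ) (g1 g2 : Fin n → H), SwRep (C := C) g g1 g2 →
        α.act g a = ∑ i, JA (g1 i) * a * JA (HopfAlgebra.antipode (R := C) (g2 i)))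
    (JB : H →ₐ[C] B) (JBstar : ∀ g : H, JB (star g) = star (JB g))
    (hB : ∀ (g : H) (b : B) (n : ℕ) (g1 g2 : Fin n → H), SwRep (C := C) g g1 g2 →
        β.act g b = ∑ i, JB (g1 i) * b * JB (HopfAlgebra.antipode (R := C) (g2 i)))
    {E : Type*} [AddCommGroup E] [Module C E]
    (smull : B → E → E) (smulr : E → A → E)
    (smull_add : ∀ (b : B) (x y : E), smull b (x + y) = smull b x + smull b y)
    (add_smull : ∀ (b b' : B) (x : E), smull (b + b') x = smull b x + smull b' x)
    (smull_mul : ∀ (b b' : B) (x : E), smull (b * b') x = smull b (smull b' x))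
    (smull_one : ∀ x : E, smull 1 x = x)
    (smulr_add : ∀ (x : E) (a a' : A), smulr x (a + a') = smulr x a + smulr x a')
    (add_smulr : ∀ (x y : E) (a : A), smulr (x + y) a = smulr x a + smulr y a)
    (smulr_mul : ∀ (x : E) (a a' : A), smulr x (a * a') = smulr (smulr x a) a')
    (smulr_one : ∀ x : E, smulr x 1 = x)
    (bimod_assoc : ∀ (b : B) (x : E) (a : A), smull b (smulr x a) = smulr (smull b x) a)
    (smull_csmul : ∀ (c : C) (b : B) (x : E), smull (c • b) x = c • smull b x)
    (smulr_csmul : ∀ (c : C) (x : E) (a : A), smulr x (c • a) = c • smulr x a) :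
    ∃ actE : H → E → E,
      (∀ (g : H) (x : E) (n : ℕ) (g1 g2 : Fin n → H), SwRep (C := C) g g1 g2 →
          actE g x =
            ∑ i, smull (JB (g1 i)) (smulr x (JA (HopfAlgebra.antipode (R := C) (g2 i))))) ∧
      (∀ x : E, actE 1 x = x) ∧
      (∀ (g h : H) (x : E), actE (g * h) x = actE g (actE h x)) ∧
      (∀ (g : H) (b : B) (x : E) (a : A) (n : ℕ) (p q : Fin n → H),
          SwRep (C := C) g p q →
          ∀ (m : Fin n → ℕ) (p1 p2 : (i : Fin n) → Fin (m i) → H),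
            (∀ i, SwRep (C := C) (p i) (p1 i) (p2 i)) →
            actE g (smull b (smulr x a)) =
              ∑ i, ∑ j, smull (β.act (p1 i j) b)
                (smulr (actE (p2 i j) x) (α.act (q i) a))) := by
  classical

  -- abbreviation for the antipode
  have smull_smulc : ∀ (c : C) (b : B) (x : E), smull b (c • x) = c • smull b x := by
    intro c b x
    have h1 : c • x = smull (c • 1) x := by rw [smull_csmul, smull_one]
    rw [h1, ← smull_mul, mul_smul_comm, mul_one, smull_csmul]
  have smulr_smulc : ∀ (c : C) (x : E) (a : A), smulr (c • x) a = c • smulr x a := by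
    intro c x a
    have h1 : c • x = smulr x (c • 1) := by rw [smulr_csmul, smulr_one]
    rw [h1, ← smulr_mul, smul_mul_assoc, one_mul, smulr_csmul]
  have smull_zero : ∀ y : E, smull 0 y = 0 := by
    intro y; have := smull_csmul 0 0 y; simpa using this
  have smull_zero' : ∀ b : B, smull b (0 : E) = 0 := by
    intro b; have := smull_smulc 0 b 0; simpa using this
  have smulr_zero : ∀ a : A, smulr (0 : E) a = 0 := by
    intro a; have := smulr_smulc 0 0 a; simpa using this
  have smulr_zero' : ∀ y : E, smulr y (0 : A) = 0 := by
    intro y; have := smulr_csmul 0 y 0; simpa using this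
  -- finite-sum distribution lemmas
  have smull_sumL : ∀ {ι : Type} (t : Finset ι) (F : ι → B) (y : E),
      smull (∑ u ∈ t, F u) y = ∑ u ∈ t, smull (F u) y := by
    intro ι t F y
    induction t using Finset.cons_induction with
    | empty => simpa using smull_zero y
    | cons a t ha ih => rw [Finset.sum_cons, add_smull, ih, Finset.sum_cons]
  have smull_sumR : ∀ {ι : Type} (t : Finset ι) (b : B) (F : ι → E),
      smull b (∑ u ∈ t, F u) = ∑ u ∈ t, smull b (F u) := by
    intro ι t bb F
    induction t using Finset.cons_induction with
    | empty => simpa using smull_zero' bb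
    | cons a t ha ih => rw [Finset.sum_cons, smull_add, ih, Finset.sum_cons]
  have smulr_sumL : ∀ {ι : Type} (t : Finset ι) (F : ι → E) (a : A),
      smulr (∑ u ∈ t, F u) a = ∑ u ∈ t, smulr (F u) a := by
    intro ι t F aa
    induction t using Finset.cons_induction with
    | empty => simpa using smulr_zero aa
    | cons a t ha ih => rw [Finset.sum_cons, add_smulr, ih, Finset.sum_cons]
  have smulr_sumR : ∀ {ι : Type} (t : Finset ι) (y : E) (F : ι → A),
      smulr y (∑ u ∈ t, F u) = ∑ u ∈ t, smulr y (F u) := by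
    intro ι t y F
    induction t using Finset.cons_induction with
    | empty => simpa using smulr_zero' y
    | cons a t ha ih => rw [Finset.sum_cons, smulr_add, ih, Finset.sum_cons]
  -- the bundled bilinear maps
  let sL : B →ₗ[C] E →ₗ[C] E := LinearMap.mk₂ C smull add_smull smull_csmul smull_add smull_smulc
  let rL : A →ₗ[C] E →ₗ[C] E := LinearMap.mk₂ C (fun a x => smulr x a)
      (fun a a' x => smulr_add x a a') (fun c a x => smulr_csmul c x a)
      (fun a x y => add_smulr x y a) (fun c a x => smulr_smulc c x a)
  let G : H →ₗ[C] H →ₗ[C] E →ₗ[C] E := LinearMap.mk₂ C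
      (fun u v => (sL (JB u)).comp (rL (JA (antipode (R := C) v))))
      (fun u u' v => by ext x; simp [sL, map_add])
      (fun c u v => by ext x; simp [sL, map_smul])
      (fun u v v' => by ext x; simp [rL, sL, map_add])
      (fun c u v => by ext x; simp [rL, sL, map_smul])
  let act : H → E → E := fun g x => TensorProduct.lift G (Coalgebra.comul (R := C) g) x
  have hform : ∀ (g : H) (x : E) (k : ℕ) (u v : Fin k → H), SwRep (C := C) g u v →
      act g x = ∑ i, smull (JB (u i)) (smulr x (JA (antipode (R := C) (v i)))) := by
    intro g x k u v hg
    have hg' : Coalgebra.comul (R := C) g = ∑ i, u i ⊗ₜ[C] v i := hg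
    show TensorProduct.lift G (Coalgebra.comul (R := C) g) x = _
    rw [hg', map_sum, LinearMap.sum_apply]
    exact Finset.sum_congr rfl fun i _ => rfl
  have act_add : ∀ (g g' : H) (x : E), act (g + g') x = act g x + act g' x := by
    intro g g' x
    show TensorProduct.lift G (Coalgebra.comul (R := C) (g + g')) x = _
    rw [map_add, map_add, LinearMap.add_apply]
  have act_smul : ∀ (c : C) (g : H) (x : E), act (c • g) x = c • act g x := by
    intro c g x
    show TensorProduct.lift G (Coalgebra.comul (R := C) (c • g)) x = _
    rw [map_smul, map_smul, LinearMap.smul_apply]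
  refine ⟨act, fun g x n g1 g2 h => hform g x n g1 g2 h, ?_, ?_, ?_⟩
  · -- act 1 = id
    intro x
    have h1 : SwRep (C := C) (1 : H) (fun _ : Fin 1 => 1) (fun _ : Fin 1 => 1) := by
      show Coalgebra.comul (R := C) (1 : H) = _
      rw [Bialgebra.comul_one]; simp [Algebra.TensorProduct.one_def]
    rw [hform 1 x 1 _ _ h1]
    simp [antipode_one', smull_one, smulr_one]
  · -- multiplicativity
    intro g h x
    obtain ⟨ng, g1, g2, hg⟩ := exists_swrep (C := C) g
    obtain ⟨nh, h1, h2, hh⟩ := exists_swrep (C := C) h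
    have hg' : Coalgebra.comul (R := C) g = ∑ i, g1 i ⊗ₜ[C] g2 i := hg
    have hh' : Coalgebra.comul (R := C) h = ∑ j, h1 j ⊗ₜ[C] h2 j := hh
    have hprod : Coalgebra.comul (R := C) (g * h)
        = ∑ i, ∑ j, (g1 i * h1 j) ⊗ₜ[C] (g2 i * h2 j) := by
      rw [Bialgebra.comul_mul, hg', hh', Finset.sum_mul_sum]
      simp [Algebra.TensorProduct.tmul_mul_tmul]
    have lhs : act (g * h) x
        = ∑ i, ∑ j, smull (JB (g1 i * h1 j)) (smulr x (JA (antipode (R := C) (g2 i * h2 j)))) := by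
      show TensorProduct.lift G (Coalgebra.comul (R := C) (g * h)) x = _
      rw [hprod, map_sum, LinearMap.sum_apply]
      refine Finset.sum_congr rfl fun i _ => ?_
      rw [map_sum, LinearMap.sum_apply]
      exact Finset.sum_congr rfl fun j _ => rfl
    rw [lhs, hform g (act h x) ng g1 g2 hg, hform h x nh h1 h2 hh]
    refine Finset.sum_congr rfl fun i _ => ?_
    rw [smulr_sumL, smull_sumR]
    refine Finset.sum_congr rfl fun j _ => ?_
    rw [antipode_mul', map_mul JA, map_mul JB, smulr_mul, smull_mul, bimod_assoc]
  · -- compatibility with the bimodule structure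
    intro g b x a n p q hg m p1 p2 hp
    choose mq r s hr using fun i => exists_swrep (C := C) (q i)
    choose mu u v hu using fun i (j : Fin (mq i)) => exists_swrep (C := C) (r i j)
    choose mef e f hef using fun i (j : Fin (mq i)) => exists_swrep (C := C) (s i j)
    -- Step 1
    have step1 : ∀ (z : A) (h : H) (k : ℕ) (h1 h2 : Fin k → H), SwRep (C := C) h h1 h2 →
        ∑ j, smull (β.act (h1 j) b) (smulr (act (h2 j) x) z)
          = ∑ j, smull (JB (h1 j) * b) (smulr x (JA (antipode (R := C) (h2 j)) * z)) := by
      intro z h k h1 h2 hh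
      choose k1 r1 s1 hr1 using fun j => exists_swrep (C := C) (h1 j)
      choose k2 c2 d2 hc2 using fun j => exists_swrep (C := C) (h2 j)
      choose k3 u3 v3 hu3 using fun j (t : Fin (k2 j)) => exists_swrep (C := C) (c2 j t)
      choose k4 e4 f4 he4 using fun j (t : Fin (k2 j)) => exists_swrep (C := C) (d2 j t)
      calc ∑ j, smull (β.act (h1 j) b) (smulr (act (h2 j) x) z)
          = ∑ j, ∑ t, smull (JB (r1 j t) * b * JB (antipode (R := C) (s1 j t)))
              (smulr (act (h2 j) x) z) := by
            refine Finset.sum_congr rfl fun j _ => ?_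
            rw [hB (h1 j) b _ (r1 j) (s1 j) (hr1 j), smull_sumL]
        _ = ∑ j, ∑ t, smull (JB (h1 j) * b * JB (antipode (R := C) (c2 j t)))
              (smulr (act (d2 j t) x) z) := by
            refine swrep_coassoc (C := C) (M := E)
              (fun α β' γ => smull (JB α * b * JB (antipode (R := C) β'))
                (smulr (act γ x) z)) ?_ ?_ ?_ ?_ ?_ ?_ hh hr1 hh hc2 <;>
              intros <;>
              simp only [map_add, map_smul, add_mul, mul_add, smul_mul_assoc, mul_smul_comm,
                add_smull, smull_csmul, smull_add, smull_smulc, smulr_add, smulr_csmul,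
                add_smulr, smulr_smulc, act_add, act_smul]
        _ = ∑ j, ∑ t, ∑ w, smull (JB (h1 j) * b * JB (antipode (R := C) (c2 j t)) * JB (e4 j t w))
              (smulr x (JA (antipode (R := C) (f4 j t w)) * z)) := by
            refine Finset.sum_congr rfl fun j _ => Finset.sum_congr rfl fun t _ => ?_
            rw [hform (d2 j t) x _ _ _ (he4 j t), smulr_sumL, smull_sumR]
            refine Finset.sum_congr rfl fun w _ => ?_
            rw [← bimod_assoc, ← smull_mul, ← smulr_mul]
        _ = ∑ j, ∑ t, ∑ w, smull (JB (h1 j) * b * JB (antipode (R := C) (u3 j t w)) * JB (v3 j t w))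
              (smulr x (JA (antipode (R := C) (d2 j t)) * z)) := by
            refine Finset.sum_congr rfl fun j _ => ?_
            refine (swrep_coassoc (C := C) (M := E)
              (fun α β' γ => smull (JB (h1 j) * b * JB (antipode (R := C) α) * JB β')
                (smulr x (JA (antipode (R := C) γ) * z))) ?_ ?_ ?_ ?_ ?_ ?_
              (hc2 j) (hu3 j) (hc2 j) (he4 j)).symm <;>
              intros <;>
              simp only [map_add, map_smul, add_mul, mul_add, smul_mul_assoc, mul_smul_comm,
                add_smull, smull_csmul, smull_add, smull_smulc, smulr_add, smulr_csmul,
                add_smulr, smulr_smulc]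
        _ = ∑ j, smull (JB (h1 j) * b) (smulr x (JA (antipode (R := C) (h2 j)) * z)) := by
            refine Finset.sum_congr rfl fun j _ => ?_
            have reassoc : ∀ t w, smull (JB (h1 j) * b * JB (antipode (R := C) (u3 j t w))
                  * JB (v3 j t w)) (smulr x (JA (antipode (R := C) (d2 j t)) * z))
                = smull (JB (h1 j) * b * JB (antipode (R := C) (u3 j t w) * v3 j t w))
                  (smulr x (JA (antipode (R := C) (d2 j t)) * z)) := by
              intro t w; rw [mul_assoc (JB (h1 j) * b), ← map_mul]
            rw [Finset.sum_congr rfl fun t _ => Finset.sum_congr rfl fun w _ => reassoc t w]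
            have coll := swrep_collapse (C := C) (M := E)
              (fun w' t' => smull (JB (h1 j) * b * JB w')
                (smulr x (JA (antipode (R := C) t') * z)))
              (by intros; simp only [map_add, mul_add, add_smull])
              (by intros; simp only [map_smul, mul_smul_comm, smull_csmul])
              (by intros; simp only [map_add, add_mul, smulr_add, smull_add])
              (by intros; simp only [map_smul, smul_mul_assoc, smulr_csmul, smull_smulc])
              (hc2 j) (hu3 j)
            simp only [map_one, mul_one] at coll
            exact coll
    -- main computation
    have lhs_eq : act g (smull b (smulr x a))
        = ∑ i, smull (JB (p i) * b) (smulr x (a * JA (antipode (R := C) (q i)))) := by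
      rw [hform g _ n p q hg]
      refine Finset.sum_congr rfl fun i _ => ?_
      rw [← bimod_assoc, ← smull_mul, ← smulr_mul]
    have rhs_eq : ∑ i, ∑ j, smull (β.act (p1 i j) b)
          (smulr (act (p2 i j) x) (α.act (q i) a))
        = ∑ i, smull (JB (p i) * b) (smulr x (a * JA (antipode (R := C) (q i)))) := by
      calc ∑ i, ∑ j, smull (β.act (p1 i j) b) (smulr (act (p2 i j) x) (α.act (q i) a))
          = ∑ i, ∑ j, smull (JB (p1 i j) * b)
              (smulr x (JA (antipode (R := C) (p2 i j)) * α.act (q i) a)) :=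
            Finset.sum_congr rfl fun i _ =>
              step1 (α.act (q i) a) (p i) (m i) (p1 i) (p2 i) (hp i)
        _ = ∑ i, ∑ j, smull (JB (p i) * b)
              (smulr x (JA (antipode (R := C) (r i j)) * α.act (s i j) a)) := by
            refine swrep_coassoc (C := C) (M := E)
              (fun α' β' γ => smull (JB α' * b)
                (smulr x (JA (antipode (R := C) β') * α.act γ a))) ?_ ?_ ?_ ?_ ?_ ?_
              hg hp hg hr <;>
              intros <;>
              simp only [map_add, map_smul, LinearMap.add_apply, LinearMap.smul_apply,
                add_mul, mul_add, smul_mul_assoc, mul_smul_comm,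
                add_smull, smull_csmul, smull_add, smull_smulc, smulr_add, smulr_csmul,
                add_smulr, smulr_smulc]
        _ = ∑ i, ∑ j, ∑ k, smull (JB (p i) * b)
              (smulr x (JA (antipode (R := C) (r i j))
                * (JA (e i j k) * (a * JA (antipode (R := C) (f i j k)))))) := by
            refine Finset.sum_congr rfl fun i _ => Finset.sum_congr rfl fun j _ => ?_
            rw [hA (s i j) a _ _ _ (hef i j)]
            rw [Finset.mul_sum, smulr_sumR, smull_sumR]
            refine Finset.sum_congr rfl fun k _ => ?_
            simp only [mul_assoc]
        _ = ∑ i, ∑ j, ∑ k, smull (JB (p i) * b)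
              (smulr x (JA (antipode (R := C) (u i j k))
                * (JA (v i j k) * (a * JA (antipode (R := C) (s i j)))))) := by
            refine Finset.sum_congr rfl fun i _ => ?_
            refine (swrep_coassoc (C := C) (M := E)
              (fun α' β' γ => smull (JB (p i) * b)
                (smulr x (JA (antipode (R := C) α')
                  * (JA β' * (a * JA (antipode (R := C) γ)))))) ?_ ?_ ?_ ?_ ?_ ?_
              (hr i) (hu i) (hr i) (hef i)).symm <;>
              intros <;>
              simp only [map_add, map_smul, add_mul, mul_add, smul_mul_assoc, mul_smul_comm,
                add_smull, smull_csmul, smull_add, smull_smulc, smulr_add, smulr_csmul,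
                add_smulr, smulr_smulc]
        _ = ∑ i, smull (JB (p i) * b) (smulr x (a * JA (antipode (R := C) (q i)))) := by
            refine Finset.sum_congr rfl fun i _ => ?_
            have reassoc : ∀ j k, smull (JB (p i) * b)
                  (smulr x (JA (antipode (R := C) (u i j k))
                    * (JA (v i j k) * (a * JA (antipode (R := C) (s i j))))))
                = smull (JB (p i) * b)
                  (smulr x (JA (antipode (R := C) (u i j k) * v i j k)
                    * (a * JA (antipode (R := C) (s i j))))) := by
              intro j k; rw [← mul_assoc, ← map_mul]
            rw [Finset.sum_congr rfl fun j _ => Finset.sum_congr rfl fun k _ => reassoc j k]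
            have coll := swrep_collapse (C := C) (M := E)
              (fun w' t' => smull (JB (p i) * b)
                (smulr x (JA w' * (a * JA (antipode (R := C) t')))))
              (by intros; simp only [map_add, add_mul, smulr_add, smull_add])
              (by intros; simp only [map_smul, smul_mul_assoc, smulr_csmul, smull_smulc])
              (by intros; simp only [map_add, mul_add, smulr_add, smull_add])
              (by intros; simp only [map_smul, mul_smul_comm, smulr_csmul, smull_smulc])
              (hr i) (hu i)
            simp only [map_one, one_mul] at coll
            exact coll
    exact lhs_eq.trans rhs_eq.symm
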